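/- For every permutation w of the positive integers with only finitely many non-fixed points, p_1432(w) = Σ_{(i,j) ∈ RD(w)} #{a < i : w(a) < j} · #{c : i < c < w^{-1}(j) and j < w(c) < w(i)}. -/

import Mathlib

/-- The simple transposition corresponding to the cell `(i, j)`, namely
`s_{i+j-1}`, swapping `i+j-1` and `i+j` (as a permutation of the positive integers). -/
def cellTrans (p : ℕ+ × ℕ+) : Equiv.Perm ℕ+ :=
  Equiv.swap (p.1 + p.2 - 1) (p.1 + p.2)

/-- Key used to order cells: rows increasing, and within a row, columns decreasing. -/
def cellKey (p : ℕ+ × ℕ+) : Lex (ℕ+ × ℕ+ᵒᵈ) :=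
  toLex (p.1, OrderDual.toDual p.2)

/-- The product of the simple transpositions `s_{i+j-1}` over the cells `(i,j)` of `D`,
taken with `i` increasing and, for fixed `i`, `j` decreasing. -/
def pdWord (D : Finset (ℕ+ × ℕ+)) : Equiv.Perm ℕ+ :=
  (((D.image cellKey).sort (· ≤ ·)).map
    (fun q => cellTrans ((ofLex q).1, OrderDual.ofDual (ofLex q).2))).prod

/-- The number of inversions of a permutation of the positive integers. -/
noncomputable def invNum (w : Equiv.Perm ℕ+) : ℕ :=
  Set.ncard {p : ℕ+ × ℕ+ | p.1 < p.2 ∧ w p.2 < w p.1}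

/-- `D` is a pipe dream (RC-graph) of `w`. -/
def IsPipeDream (w : Equiv.Perm ℕ+) (D : Finset (ℕ+ × ℕ+)) : Prop :=
  D.card = invNum w ∧ pdWord D = w

/-- The number of pipe dreams of `w`. -/
noncomputable def nu (w : Equiv.Perm ℕ+) : ℕ :=
  Set.ncard {D : Finset (ℕ+ × ℕ+) | IsPipeDream w D}

/-- The number of occurrences of the pattern 132 in `w`. -/
noncomputable def p132 (w : Equiv.Perm ℕ+) : ℕ :=
  Set.ncard {t : ℕ+ × ℕ+ × ℕ+ |
    t.1 < t.2.1 ∧ t.2.1 < t.2.2 ∧ w t.1 < w t.2.2 ∧ w t.2.2 < w t.2.1}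

/-- The number of occurrences of the pattern 1432 in `w`. -/
noncomputable def p1432 (w : Equiv.Perm ℕ+) : ℕ :=
  Set.ncard {t : ℕ+ × ℕ+ × ℕ+ × ℕ+ |
    t.1 < t.2.1 ∧ t.2.1 < t.2.2.1 ∧ t.2.2.1 < t.2.2.2 ∧
    w t.1 < w t.2.2.2 ∧ w t.2.2.2 < w t.2.2.1 ∧ w t.2.2.1 < w t.2.1}

/-- `w` avoids the pattern 1432. -/
def Avoids1432 (w : Equiv.Perm ℕ+) : Prop :=
  ¬ ∃ a b c d : ℕ+, a < b ∧ b < c ∧ c < d ∧ w a < w d ∧ w d < w c ∧ w c < w b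

/-- The Rothe diagram of `w`. -/
def RD (w : Equiv.Perm ℕ+) : Set (ℕ+ × ℕ+) :=
  {p | p.2 < w p.1 ∧ p.1 < w⁻¹ p.2}

/-- The Lehmer code of `w`: `code(w)_i = #{j > i : w(j) < w(i)}`. -/
noncomputable def lehmer (w : Equiv.Perm ℕ+) (i : ℕ+) : ℕ :=
  Set.ncard {j : ℕ+ | i < j ∧ w j < w i}

/-- The bottom pipe dream `B_w = {(i,j) : 1 ≤ j ≤ code(w)_i}` (as a set of cells). -/
def bottomSet (w : Equiv.Perm ℕ+) : Set (ℕ+ × ℕ+) :=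
  {p | (p.2 : ℕ) ≤ lehmer w p.1}

/-- The top pipe dream `T_w = {(i,j) : 1 ≤ i ≤ code(w⁻¹)_j}` (as a set of cells). -/
def topSet (w : Equiv.Perm ℕ+) : Set (ℕ+ × ℕ+) :=
  {p | (p.1 : ℕ) ≤ lehmer w⁻¹ p.2}

/-- `α(S)_m`: the number of cells of `S` on the diagonal `{(i,j) : i + j - 1 = m}`. -/
noncomputable def diagCount (S : Set (ℕ+ × ℕ+)) : ℕ+ → ℕ :=
  fun m => Set.ncard {p | p ∈ S ∧ p.1 + p.2 = m + 1}

/-- Ladder move of order `k` taking `D` to `D'`: writing `i = i₀ + k + 1` (so `i₀ = i - k - 1`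
and automatically `i ≥ k + 2`), it requires `(i,j) ∈ D`, `(i,j+1) ∉ D`, `(i₀,j) ∉ D`,
`(i₀,j+1) ∉ D`, and `(i',j), (i',j+1) ∈ D` for all `i - k ≤ i' < i`; it removes `(i,j)` and
adds `(i₀, j+1)`. -/
def LadderMove (k : ℕ) (D D' : Finset (ℕ+ × ℕ+)) : Prop :=
  ∃ i₀ j : ℕ+,
    (i₀ + k.succPNat, j) ∈ D ∧
    (i₀ + k.succPNat, j + 1) ∉ D ∧
    (i₀, j) ∉ D ∧
    (i₀, j + 1) ∉ D ∧
    (∀ i' : ℕ+, i₀ < i' → i' < i₀ + k.succPNat → (i', j) ∈ D ∧ (i', j + 1) ∈ D) ∧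
    D' = insert (i₀, j + 1) (D.erase (i₀ + k.succPNat, j))

/-- `p_1432(w) = Σ_{(i,j) ∈ RD(w)} #A_{(i,j)} · #C_{(i,j)}`. -/
theorem p1432_eq_sum_over_rothe (w : Equiv.Perm ℕ+)
    (hw : {x : ℕ+ | w x ≠ x}.Finite) :
    p1432 w = ∑ᶠ p ∈ RD w,
      Set.ncard {a : ℕ+ | a < p.1 ∧ w a < p.2} *
        Set.ncard {c : ℕ+ | p.1 < c ∧ c < w⁻¹ p.2 ∧ p.2 < w c ∧ w c < w p.1} := by
  classical
  obtain ⟨N, hNub⟩ := hw.bddAbove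
  have hfix : ∀ x : ℕ+, N < x → w x = x := by
    intro x hx
    by_contra h
    exact absurd (hNub h) (not_le.mpr hx)
  have himg : ∀ x : ℕ+, N < w x → w x = x := fun x hx => w.injective (hfix _ hx)
  have hinvimg : ∀ x : ℕ+, N < w⁻¹ x → w⁻¹ x = x := by
    intro x hx
    have h := hfix (w⁻¹ x) hx
    rw [show w (w⁻¹ x) = x from w.apply_symm_apply x] at h
    exact h.symm
  have hmap : ∀ x : ℕ+, x ≤ N → w x ≤ N := by
    intro x hx
    by_contra h
    rw [himg x (not_le.mp h)] at h
    exact h hx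
  have hAfin : ∀ p : ℕ+ × ℕ+, {a : ℕ+ | a < p.1 ∧ w a < p.2}.Finite :=
    fun p => (Set.finite_Iio p.1).subset fun a ha => ha.1
  have hCfin : ∀ p : ℕ+ × ℕ+,
      {c : ℕ+ | p.1 < c ∧ c < w⁻¹ p.2 ∧ p.2 < w c ∧ w c < w p.1}.Finite :=
    fun p => (Set.finite_Iio (w⁻¹ p.2)).subset fun c hc => hc.2.1
  have hRDfin : (RD w).Finite := by
    apply ((Set.finite_Iic N).prod (Set.finite_Iic N)).subset
    rintro ⟨i, j⟩ ⟨hj, hi⟩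
    have hiN : i ≤ N := by
      by_contra h
      push_neg at h
      rw [hfix i h] at hj
      rw [hinvimg j (h.trans hi)] at hi
      exact absurd (hi.trans hj) (lt_irrefl i)
    exact ⟨hiN, (hj.trans_le (hmap i hiN)).le⟩
  set T : Set (ℕ+ × ℕ+ × ℕ+ × ℕ+) := {t | t.1 < t.2.1 ∧ t.2.1 < t.2.2.1 ∧ t.2.2.1 < t.2.2.2 ∧
    w t.1 < w t.2.2.2 ∧ w t.2.2.2 < w t.2.2.1 ∧ w t.2.2.1 < w t.2.1} with hT
  have hTfin : T.Finite := by
    apply ((Set.finite_Iic N).prod ((Set.finite_Iic N).prod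
      ((Set.finite_Iic N).prod (Set.finite_Iic N)))).subset
    rintro ⟨a, b, c, d⟩ ⟨h1, h2, h3, h4, h5, h6⟩
    have hdN : d ≤ N := by
      by_contra h
      push_neg at h
      rw [hfix d h] at h5
      rw [himg c (h.trans h5)] at h5
      exact absurd (h3.trans h5) (lt_irrefl _)
    exact ⟨(h1.trans (h2.trans (h3.trans_le hdN))).le, (h2.trans (h3.trans_le hdN)).le,
      (h3.trans_le hdN).le, hdN⟩
  set f : ℕ+ × ℕ+ × ℕ+ × ℕ+ → (ℕ+ × ℕ+) × ℕ+ × ℕ+ :=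
    fun t => ((t.2.1, w t.2.2.2), t.1, t.2.2.1) with hf
  have hfinj : Function.Injective f := by
    rintro ⟨a, b, c, d⟩ ⟨a', b', c', d'⟩ h
    simp only [hf, Prod.mk.injEq] at h
    obtain ⟨⟨hb, hd⟩, ha, hc⟩ := h
    simp [Prod.ext_iff, ha, hb, hc, w.injective hd]
  set U : Set ((ℕ+ × ℕ+) × ℕ+ × ℕ+) := {q | q.1 ∈ RD w ∧ (q.2.1 < q.1.1 ∧ w q.2.1 < q.1.2) ∧
    (q.1.1 < q.2.2 ∧ q.2.2 < w⁻¹ q.1.2 ∧ q.1.2 < w q.2.2 ∧ w q.2.2 < w q.1.1)} with hU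
  have himgT : f '' T = U := by
    ext ⟨⟨i, j⟩, a, c⟩
    constructor
    · rintro ⟨⟨a', b', c', d'⟩, ⟨h1, h2, h3, h4, h5, h6⟩, hq⟩
      simp only [hf, Prod.mk.injEq] at hq
      obtain ⟨⟨hb, hd⟩, ha, hc⟩ := hq
      subst hb hd ha hc
      refine ⟨⟨h5.trans h6, ?_⟩, ⟨h1, h4⟩, ⟨h2, ?_, h5, h6⟩⟩
      · simpa using h2.trans h3
      · simpa using h3
    · rintro ⟨⟨hji, hiwj⟩, ⟨ha1, ha2⟩, ⟨hc1, hc2, hc3, hc4⟩⟩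
      refine ⟨(a, i, c, w⁻¹ j), ⟨ha1, hc1, hc2, ?_, ?_, hc4⟩, ?_⟩
      · simpa using ha2
      · simpa using hc3
      · simp [hf]
  have hUfin : U.Finite := himgT ▸ hTfin.image f
  have key : U.ncard = ∑ p ∈ hRDfin.toFinset,
      Set.ncard {a : ℕ+ | a < p.1 ∧ w a < p.2} *
        Set.ncard {c : ℕ+ | p.1 < c ∧ c < w⁻¹ p.2 ∧ p.2 < w c ∧ w c < w p.1} := by
    rw [Set.ncard_eq_toFinset_card U hUfin]
    rw [Finset.card_eq_sum_card_fiberwise (f := Prod.fst) (t := hRDfin.toFinset)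
      (fun q hq => by
        simp only [Finset.mem_coe, Set.Finite.mem_toFinset] at *
        exact hq.1)]
    refine Finset.sum_congr rfl fun p hp => ?_
    have hfiber : Finset.filter (fun q => q.1 = p) hUfin.toFinset
        = Finset.image (fun x : ℕ+ × ℕ+ => (p, x))
            ((hAfin p).toFinset ×ˢ (hCfin p).toFinset) := by
      ext ⟨p', a, c⟩
      simp only [Finset.mem_filter, Set.Finite.mem_toFinset, Finset.mem_image,
        Finset.mem_product, Set.mem_setOf_eq, Prod.mk.injEq, Prod.exists]
      constructor
      · rintro ⟨⟨hRD, hA, hC⟩, hp'⟩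
        subst hp'
        exact ⟨a, c, ⟨hA, hC⟩, rfl, rfl, rfl⟩
      · rintro ⟨a', c', ⟨hA, hC⟩, h1, h2, h3⟩
        subst h1 h2 h3
        simp only [Set.Finite.mem_toFinset] at hp
        exact ⟨⟨hp, hA, hC⟩, rfl⟩
    rw [hfiber, Finset.card_image_of_injective _
      (fun x y h => by simpa using (Prod.ext_iff.mp h).2),
      Finset.card_product, ← Set.ncard_eq_toFinset_card _ (hAfin p),
      ← Set.ncard_eq_toFinset_card _ (hCfin p)]
  have hstart : p1432 w = U.ncard := by
    rw [← himgT, Set.ncard_image_of_injective T hfinj]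
    rfl
  rw [hstart, key, finsum_mem_eq_finite_toFinset_sum _ hRDfin]
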